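/- There exist ε > 0 and c > 0 such that for every T with 0 < T < ε and every x ∈ ℝ⁶, the Gramian quadratic form satisfies xᵀ·G(T)·x ≥ c·T²·‖x‖². In particular, Φ_v(T) is invertible for all T ∈ (0, ε). -/

import Mathlib

noncomputable section
set_option maxHeartbeats 1000000

/-- Euclidean norm of a finite real vector. -/
def vecEnorm {m : ℕ} (v : Fin m → ℝ) : ℝ := Real.sqrt (∑ i, v i ^ 2)

/-- The CWH dynamics matrix. -/
def cwhA (ω : ℝ) : Matrix (Fin 6) (Fin 6) ℝ :=
  !![0, 0, 0, 1, 0, 0;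
     0, 0, 0, 0, 1, 0;
     0, 0, 0, 0, 0, 1;
     3*ω^2, 0, 0, 0, 2*ω, 0;
     0, 0, 0, -2*ω, 0, 0;
     0, 0, -ω^2, 0, 0, 0]

/-- The CWH input matrix `B = [0; I₃]`. -/
def cwhB : Matrix (Fin 6) (Fin 3) ℝ :=
  !![0, 0, 0;
     0, 0, 0;
     0, 0, 0;
     1, 0, 0;
     0, 1, 0;
     0, 0, 1]

/-- State transition matrix `exp(t A)`. -/
def expm (ω t : ℝ) : Matrix (Fin 6) (Fin 6) ℝ := NormedSpace.exp (t • cwhA ω)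

/-- Horizontal concatenation of two `6 × 3` blocks into a `6 × 6` matrix. -/
def blockCat (M N : Matrix (Fin 6) (Fin 3) ℝ) : Matrix (Fin 6) (Fin 6) ℝ :=
  Matrix.of fun i j => if h : (j : ℕ) < 3 then M i ⟨j, h⟩ else N i ⟨(j : ℕ) - 3, by omega⟩

/-- The aggregated impulse matrix `Φ_v(T) = [exp(T A) B  B]`. -/
def Phiv (ω T : ℝ) : Matrix (Fin 6) (Fin 6) ℝ := blockCat (expm ω T * cwhB) cwhB

/-- The two-impulse Gramian `G(T) = Φ_v(T) Φ_v(T)ᵀ`. -/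
def gram (ω T : ℝ) : Matrix (Fin 6) (Fin 6) ℝ := Phiv ω T * (Phiv ω T).transpose

/-- First three components of a 6-vector. -/
def first3 (v : Fin 6 → ℝ) : Fin 3 → ℝ := fun i => v ⟨(i : ℕ), by omega⟩

/-- Last three components of a 6-vector. -/
def last3 (v : Fin 6 → ℝ) : Fin 3 → ℝ := fun i => v ⟨(i : ℕ) + 3, by omega⟩

/-- The stacked two-impulse steering solution. -/
def dVsteer (ω T : ℝ) (x₀ xf : Fin 6 → ℝ) : Fin 6 → ℝ :=
  (Phiv ω T)⁻¹.mulVec (xf - (expm ω T).mulVec x₀)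

/-- The fixed-duration two-impulse steering cost `J_T(x₀, x_f)`. -/
def Jfix (ω T : ℝ) (x₀ xf : Fin 6 → ℝ) : ℝ :=
  vecEnorm (first3 (dVsteer ω T x₀ xf)) + vecEnorm (last3 (dVsteer ω T x₀ xf))

/-- Euclidean operator norm of a `6 × 6` real matrix. -/
def opNorm (M : Matrix (Fin 6) (Fin 6) ℝ) : ℝ :=
  ‖(Matrix.toEuclideanCLM (𝕜 := ℝ) M : EuclideanSpace ℝ (Fin 6) →L[ℝ] EuclideanSpace ℝ (Fin 6))‖

/-! ### Auxiliary material -/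

attribute [local instance] Matrix.linftyOpNormedRing Matrix.linftyOpNormedAlgebra

theorem aux_cons_val_five {α : Type*} (a : α) (u : Fin 5 → α) : Matrix.vecCons a u 5 = u 4 := rfl

/-- Evaluation of a matrix entry as a continuous linear map. -/
def auxEvalCLM (i k : Fin 6) : Matrix (Fin 6) (Fin 6) ℝ →L[ℝ] ℝ :=
  { toFun := fun M => M i k,
    map_add' := by intros; rfl,
    map_smul' := by intros; rfl,
    cont := (continuous_apply k).comp (continuous_apply i) }

theorem aux_entry_deriv (ω : ℝ) (i k : Fin 6) :
    HasDerivAt (fun t : ℝ => expm ω t i k) (cwhA ω i k) 0 := by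
  have h2 : HasDerivAt (fun t : ℝ => expm ω t) (cwhA ω) 0 := by
    have h := hasDerivAt_exp_smul_const (𝕂 := ℝ) (cwhA ω) (0:ℝ)
    simp only [zero_smul, NormedSpace.exp_zero, one_mul] at h
    exact h
  exact ((auxEvalCLM i k).hasFDerivAt.comp_hasDerivAt 0 h2 : _)

theorem aux_expm_zero (ω : ℝ) : expm ω 0 = 1 := by
  simp [expm, NormedSpace.exp_zero]

theorem aux_quad_self (M : Matrix (Fin 6) (Fin 6) ℝ) (x : Fin 6 → ℝ) :
    dotProduct x ((M * M.transpose).mulVec x) = ∑ j, (∑ i, M i j * x i)^2 := by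
  rw [← Matrix.mulVec_mulVec, Matrix.dotProduct_mulVec, ← Matrix.mulVec_transpose]
  simp [dotProduct, Matrix.mulVec, Matrix.transpose_apply, sq]

theorem aux_quad_eq (ω T : ℝ) (x : Fin 6 → ℝ) :
    dotProduct x ((gram ω T).mulVec x)
    = (∑ i, expm ω T i 3 * x i)^2 + (∑ i, expm ω T i 4 * x i)^2
      + (∑ i, expm ω T i 5 * x i)^2 + x 3 ^2 + x 4 ^2 + x 5 ^2 := by
  rw [gram, Phiv, aux_quad_self, Fin.sum_univ_six]
  have hc0 : ∀ i : Fin 6, (expm ω T * cwhB) i 0 = expm ω T i 3 := fun i => by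
    simp [Matrix.mul_apply, cwhB, Fin.sum_univ_six, aux_cons_val_five,
      Matrix.vecHead, Matrix.vecTail]
  have hc1 : ∀ i : Fin 6, (expm ω T * cwhB) i 1 = expm ω T i 4 := fun i => by
    simp [Matrix.mul_apply, cwhB, Fin.sum_univ_six, aux_cons_val_five,
      Matrix.vecHead, Matrix.vecTail]
  have hc2 : ∀ i : Fin 6, (expm ω T * cwhB) i 2 = expm ω T i 5 := fun i => by
    simp [Matrix.mul_apply, cwhB, Fin.sum_univ_six, aux_cons_val_five,
      Matrix.vecHead, Matrix.vecTail]
  have ha : ∀ (i j : Fin 6), (h : (j:ℕ) < 3) →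
      blockCat (expm ω T * cwhB) cwhB i j = (expm ω T * cwhB) i ⟨(j:ℕ), h⟩ := by
    intro i j h; simp only [blockCat, Matrix.of_apply]; rw [dif_pos h]
  have hb : ∀ (i j : Fin 6), (3:ℕ) ≤ (j:ℕ) →
      blockCat (expm ω T * cwhB) cwhB i j = cwhB i ⟨(j:ℕ)-3, by omega⟩ := by
    intro i j hj; simp only [blockCat, Matrix.of_apply]; rw [dif_neg (by omega)]
  have e0 : ∀ i : Fin 6, blockCat (expm ω T * cwhB) cwhB i 0 = expm ω T i 3 :=
    fun i => by rw [ha i 0 (by norm_num)]; exact hc0 i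
  have e1 : ∀ i : Fin 6, blockCat (expm ω T * cwhB) cwhB i 1 = expm ω T i 4 :=
    fun i => by rw [ha i 1 (by norm_num)]; exact hc1 i
  have e2 : ∀ i : Fin 6, blockCat (expm ω T * cwhB) cwhB i 2 = expm ω T i 5 :=
    fun i => by rw [ha i 2 (by norm_num)]; exact hc2 i
  have e3 : ∀ i : Fin 6, blockCat (expm ω T * cwhB) cwhB i 3 = cwhB i 0 :=
    fun i => by rw [hb i 3 (by decide)]; exact congrArg _ (by decide)
  have e4 : ∀ i : Fin 6, blockCat (expm ω T * cwhB) cwhB i 4 = cwhB i 1 :=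
    fun i => by rw [hb i 4 (by decide)]; exact congrArg _ (by decide)
  have e5 : ∀ i : Fin 6, blockCat (expm ω T * cwhB) cwhB i 5 = cwhB i 2 :=
    fun i => by rw [hb i 5 (by decide)]; exact congrArg _ (by decide)
  simp only [e0, e1, e2, e3, e4, e5]
  have hB : ∀ j : Fin 3, (∑ i, cwhB i j * x i) = x ⟨(j:ℕ)+3, by omega⟩ := by
    intro j
    fin_cases j <;>
      simp [cwhB, Fin.sum_univ_six, aux_cons_val_five, Matrix.vecHead, Matrix.vecTail]
  rw [hB 0, hB 1, hB 2]
  rfl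

theorem aux_sq_enorm {m : ℕ} (x : Fin m → ℝ) : vecEnorm x ^ 2 = ∑ i, x i ^ 2 :=
  Real.sq_sqrt (Finset.sum_nonneg fun i _ => sq_nonneg _)

theorem aux_enorm_nonneg {m : ℕ} (x : Fin m → ℝ) : 0 ≤ vecEnorm x := Real.sqrt_nonneg _

theorem aux_abs_le_enorm {m : ℕ} (x : Fin m → ℝ) (i : Fin m) : |x i| ≤ vecEnorm x := by
  rw [← Real.sqrt_sq_eq_abs]
  exact Real.sqrt_le_sqrt (Finset.single_le_sum (fun j _ => sq_nonneg (x j)) (Finset.mem_univ i))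

theorem aux_abs_le_of_sq_le_sq (a b : ℝ) (hb : 0 ≤ b) (h : a^2 ≤ b^2) : |a| ≤ b := by
  nlinarith [abs_nonneg a, sq_abs a]

theorem aux_le_abs_of_sq_le_sq (a b : ℝ) (hb : 0 ≤ b) (h : b^2 ≤ a^2) : b ≤ |a| := by
  nlinarith [abs_nonneg a, sq_abs a]

/-- Key one-component estimate. -/
theorem aux_comp_bound (ω T n δ₀ w y u v r : ℝ)
    (hT : 0 < T) (hn : 0 ≤ n) (hω : 0 < ω)
    (hδ : 0 < δ₀) (h2ωδ : 2*ω*δ₀ ≤ 1/8)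
    (hu : n/2 ≤ |u|) (hv : |v| ≤ δ₀ * n) (hr : |r| ≤ T/8 * n)
    (heq : w - y = T * u - 2*ω*T*v + r) :
    T^2*n^2/32 ≤ w^2 + y^2 := by
  have hTu : T * u = (w - y) + 2*ω*T*v - r := by linarith
  have h1 : |T * u| ≤ |w - y| + |2*ω*T*v| + |r| := by
    rw [hTu]
    calc |w - y + 2*ω*T*v - r| ≤ |w - y + 2*ω*T*v| + |r| := abs_sub _ _
      _ ≤ |w - y| + |2*ω*T*v| + |r| := by linarith [abs_add_le (w - y) (2*ω*T*v)]
  have h2 : |T * u| = T * |u| := by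
    rw [abs_mul, abs_of_pos hT]
  have h3 : |2*ω*T*v| = 2*ω*T*|v| := by
    rw [abs_mul, abs_of_pos (mul_pos (mul_pos two_pos hω) hT)]
  have h4 : 2*ω*T*|v| ≤ T/8 * n := by
    have := mul_le_mul_of_nonneg_left hv (mul_pos (mul_pos two_pos hω) hT).le
    nlinarith [mul_nonneg hT.le hn]
  have h5 : T * (n/2) ≤ T * |u| := mul_le_mul_of_nonneg_left hu hT.le
  have h6 : T*n/4 ≤ |w - y| := by
    rw [h2] at h1; rw [h3] at h1
    linarith
  have h7 : (T*n/4)^2 ≤ (w - y)^2 := by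
    have hm : 0 ≤ T*n/4 := by positivity
    have := mul_le_mul h6 h6 hm (abs_nonneg _)
    nlinarith [sq_abs (w - y)]
  nlinarith [sq_nonneg (w + y)]

theorem aux_enorm_pos {m : ℕ} (x : Fin m → ℝ) (hx : x ≠ 0) : 0 < vecEnorm x := by
  obtain ⟨i, hi⟩ := Function.ne_iff.mp hx
  refine Real.sqrt_pos.mpr ?_
  have : 0 < x i ^ 2 :=
    lt_of_le_of_ne (sq_nonneg _) (Ne.symm (pow_ne_zero 2 hi))
  calc (0:ℝ) < x i ^ 2 := this
    _ ≤ ∑ j, x j ^ 2 := Finset.single_le_sum (fun j _ => sq_nonneg (x j)) (Finset.mem_univ i)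

/-- **Lower bound on the Gramian quadratic form near `T = 0`.** -/
theorem gramian_quadratic_lower_bound (ω : ℝ) (hω : 0 < ω) :
    ∃ ε > (0 : ℝ), ∃ c > (0 : ℝ), ∀ T : ℝ, 0 < T → T < ε →
      (∀ x : Fin 6 → ℝ,
        c * T ^ 2 * vecEnorm x ^ 2 ≤ dotProduct x ((gram ω T).mulVec x)) ∧
      IsUnit (Phiv ω T) := by
  -- eventual entrywise first-order bound on the exponential
  have key : ∀ i k : Fin 6, ∀ᶠ t in nhds (0:ℝ),
      |expm ω t i k - expm ω 0 i k - t * cwhA ω i k| ≤ (1/48) * |t| := by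
    intro i k
    have h := (hasDerivAt_iff_isLittleO.mp (aux_entry_deriv ω i k)).def
      (by norm_num : (0:ℝ) < 1/48)
    filter_upwards [h] with t ht
    simpa [Real.norm_eq_abs, smul_eq_mul] using ht
  have hall : ∀ᶠ t in nhds (0:ℝ), ∀ i k : Fin 6,
      |expm ω t i k - expm ω 0 i k - t * cwhA ω i k| ≤ (1/48) * |t| :=
    Filter.eventually_all.2 fun i => Filter.eventually_all.2 fun k => key i k
  obtain ⟨ε₁, hε₁, hP⟩ := Metric.eventually_nhds_iff.mp hall
  -- constants
  set δ₀ : ℝ := min (1/4) (1/(16*ω)) with hδ₀def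
  have hδ₀pos : 0 < δ₀ := lt_min (by norm_num) (by positivity)
  have hδ₀le : δ₀ ≤ 1/4 := min_le_left _ _
  have h2ωδ : 2*ω*δ₀ ≤ 1/8 := by
    have h1 : δ₀ ≤ 1/(16*ω) := min_le_right _ _
    have := mul_le_mul_of_nonneg_left h1 (by positivity : (0:ℝ) ≤ 2*ω)
    rw [mul_one_div] at this
    calc 2*ω*δ₀ ≤ 2*ω/(16*ω) := this
      _ = 1/8 := by rw [div_eq_iff (mul_pos (by norm_num : (0:ℝ) < 16) hω).ne']; ring
  set c : ℝ := min (δ₀^2) (1/32) with hcdef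
  have hcpos : 0 < c := lt_min (by positivity) (by norm_num)
  have hcδ : c ≤ δ₀^2 := min_le_left _ _
  have hc32 : c ≤ 1/32 := min_le_right _ _
  refine ⟨min ε₁ 1, lt_min hε₁ one_pos, c, hcpos, ?_⟩
  intro T hT0 hTε
  have hT1 : T < 1 := lt_of_lt_of_le hTε (min_le_right _ _)
  have hTε₁ : T < ε₁ := lt_of_lt_of_le hTε (min_le_left _ _)
  have hent : ∀ i k : Fin 6,
      |expm ω T i k - (if i = k then (1:ℝ) else 0) - T * cwhA ω i k| ≤ T/48 := by
    intro i k
    have hd : dist T (0:ℝ) < ε₁ := by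
      rw [Real.dist_eq, sub_zero, abs_of_pos hT0]; exact hTε₁
    have h := hP hd i k
    rw [aux_expm_zero] at h
    have h2 : |(expm ω T i k - if i = k then 1 else 0) - T * cwhA ω i k| ≤ 1/48 * |T| := by
      simpa [Matrix.one_apply] using h
    rw [abs_of_pos hT0] at h2
    linarith
  have hmain : ∀ x : Fin 6 → ℝ,
      c * T ^ 2 * vecEnorm x ^ 2 ≤ dotProduct x ((gram ω T).mulVec x) := by
    clear key hall hP
    intro x
    set n := vecEnorm x with hndef
    have hn0 : 0 ≤ n := aux_enorm_nonneg x
    have hn2 : n^2 = x 0^2 + x 1^2 + x 2^2 + x 3^2 + x 4^2 + x 5^2 := by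
      rw [hndef, aux_sq_enorm, Fin.sum_univ_six]
    have hxa : ∀ i, |x i| ≤ n := fun i => aux_abs_le_enorm x i
    rw [aux_quad_eq]
    set w3 := ∑ i, expm ω T i 3 * x i with hw3
    set w4 := ∑ i, expm ω T i 4 * x i with hw4
    set w5 := ∑ i, expm ω T i 5 * x i with hw5
    -- remainder bounds
    set D : Fin 6 → Fin 6 → ℝ :=
      fun i k => expm ω T i k - (if i = k then (1:ℝ) else 0) - T * cwhA ω i k with hDdef
    have hDb : ∀ i k, |D i k| ≤ T/48 := fun i k => hent i k
    have habs : ∀ k : Fin 6, |∑ i, D i k * x i| ≤ T/8 * n := by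
      intro k
      calc |∑ i, D i k * x i| ≤ ∑ i, |D i k * x i| := Finset.abs_sum_le_sum_abs _ _
        _ ≤ ∑ _i : Fin 6, (T/48 * n) := by
            refine Finset.sum_le_sum fun i _ => ?_
            rw [abs_mul]
            exact mul_le_mul (hDb i k) (hxa i) (abs_nonneg _) (by positivity)
        _ = T/8 * n := by simp [Finset.sum_const]; ring
    have hid3 : w3 - x 3 - T * (x 0 - 2*ω*x 4) = ∑ i, D i 3 * x i := by
      simp only [hDdef, hw3, Fin.sum_univ_six]
      simp [cwhA, Fin.ext_iff]
      ring
    have hid4 : w4 - x 4 - T * (x 1 + 2*ω*x 3) = ∑ i, D i 4 * x i := by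
      simp only [hDdef, hw4, Fin.sum_univ_six]
      simp [cwhA, Fin.ext_iff]
      ring
    have hid5 : w5 - x 5 - T * (x 2) = ∑ i, D i 5 * x i := by
      simp only [hDdef, hw5, Fin.sum_univ_six]
      simp [cwhA, Fin.ext_iff]
      ring
    have hr3 : |w3 - x 3 - T * (x 0 - 2*ω*x 4)| ≤ T/8 * n := by
      rw [hid3]; exact habs 3
    have hr4 : |w4 - x 4 - T * (x 1 + 2*ω*x 3)| ≤ T/8 * n := by
      rw [hid4]; exact habs 4
    have hr5 : |w5 - x 5 - T * (x 2)| ≤ T/8 * n := by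
      rw [hid5]; exact habs 5
    clear_value n w3 w4 w5 D
    clear hw3 hw4 hw5 hDdef hndef hDb hent habs hid3 hid4 hid5
    clear D
    clear_value δ₀ c
    have hδsq : δ₀^2 ≤ 1/16 := by
      rw [pow_two]; nlinarith [mul_self_le_mul_self hδ₀pos.le hδ₀le]
    rcases le_or_gt (δ₀^2 * n^2) (x 3^2 + x 4^2 + x 5^2) with hcase | hcase
    · -- velocity part is large
      have hT2 : T^2 ≤ 1 := by nlinarith
      have step1 : c*T^2*n^2 ≤ δ₀^2*n^2 := by
        nlinarith [sq_nonneg n, mul_nonneg hcpos.le (sq_nonneg n)]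
      linarith [sq_nonneg w3, sq_nonneg w4, sq_nonneg w5]
    · -- position part is large
      have hδn : 0 ≤ δ₀ * n := mul_nonneg hδ₀pos.le hn0
      have hx4 : |x 4| ≤ δ₀ * n := by
        refine aux_abs_le_of_sq_le_sq _ _ hδn ?_
        nlinarith [sq_nonneg (x 3), sq_nonneg (x 5)]
      have hx3 : |x 3| ≤ δ₀ * n := by
        refine aux_abs_le_of_sq_le_sq _ _ hδn ?_
        nlinarith [sq_nonneg (x 4), sq_nonneg (x 5)]
      have hbig : (5/16)*n^2 ≤ x 0^2 ∨ (5/16)*n^2 ≤ x 1^2 ∨ (5/16)*n^2 ≤ x 2^2 := by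
        by_contra hcon
        push_neg at hcon
        obtain ⟨h1, h2, h3⟩ := hcon
        nlinarith [hδsq, sq_nonneg n]
      have hsuff : T^2*n^2/32 ≤ w3^2 + w4^2 + w5^2 + x 3^2 + x 4^2 + x 5^2 := by
        have hn2' : 0 ≤ n/2 := by linarith
        rcases hbig with h0 | h1 | h2
        · have hu : n/2 ≤ |x 0| := aux_le_abs_of_sq_le_sq _ _ hn2' (by nlinarith)
          have := aux_comp_bound ω T n δ₀ w3 (x 3) (x 0) (x 4)
            (w3 - x 3 - T * (x 0 - 2*ω*x 4))
            hT0 hn0 hω hδ₀pos h2ωδ hu hx4 hr3 (by ring)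
          linarith [sq_nonneg w4, sq_nonneg w5, sq_nonneg (x 4), sq_nonneg (x 5)]
        · have hu : n/2 ≤ |x 1| := aux_le_abs_of_sq_le_sq _ _ hn2' (by nlinarith)
          have hx3' : |-(x 3)| ≤ δ₀ * n := by rwa [abs_neg]
          have := aux_comp_bound ω T n δ₀ w4 (x 4) (x 1) (-(x 3))
            (w4 - x 4 - T * (x 1 + 2*ω*x 3))
            hT0 hn0 hω hδ₀pos h2ωδ hu hx3' hr4 (by ring)
          linarith [sq_nonneg w3, sq_nonneg w5, sq_nonneg (x 3), sq_nonneg (x 5)]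
        · have hu : n/2 ≤ |x 2| := aux_le_abs_of_sq_le_sq _ _ hn2' (by nlinarith)
          have hz : |(0:ℝ)| ≤ δ₀ * n := by rw [abs_zero]; exact hδn
          have := aux_comp_bound ω T n δ₀ w5 (x 5) (x 2) 0
            (w5 - x 5 - T * (x 2))
            hT0 hn0 hω hδ₀pos h2ωδ hu hz hr5 (by ring)
          linarith [sq_nonneg w3, sq_nonneg w4, sq_nonneg (x 3), sq_nonneg (x 4)]
      have hTn : 0 ≤ T^2*n^2 := mul_nonneg (sq_nonneg T) (sq_nonneg n)
      nlinarith [hsuff, hc32, hTn]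
  refine ⟨hmain, ?_⟩
  -- invertibility
  rw [Matrix.isUnit_iff_isUnit_det, isUnit_iff_ne_zero]
  intro hdet
  have hdetT : (Phiv ω T).transpose.det = 0 := by rw [Matrix.det_transpose]; exact hdet
  obtain ⟨v, hv0, hv⟩ := Matrix.exists_mulVec_eq_zero_iff.mpr hdetT
  have hgv : (gram ω T).mulVec v = 0 := by
    rw [gram, ← Matrix.mulVec_mulVec, hv, Matrix.mulVec_zero]
  have h0 : dotProduct v ((gram ω T).mulVec v) = 0 := by
    rw [hgv, dotProduct_zero]
  have hpos : 0 < c * T^2 * vecEnorm v ^ 2 := by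
    have := aux_enorm_pos v hv0
    positivity
  have := hmain v
  rw [h0] at this
  linarith

end
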